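/- Let M = I - Q be an n×n SDD matrix where Q is entrywise nonnegative with zero diagonal and ρ(Q) ≤ 1/3. Let v = (I - Q)𝟙 (entrywise nonnegative) and define the (n+1)×(n+1) matrix L = [[I, 0],[0, ‖v‖_1]] - [[Q, v],[v^T, 0]]. Then L is a graph Laplacian (symmetric, zero row sums, nonpositive off-diagonal entries), and for all i, j ∈ [n], δ_{i,j}^T L^† δ_{i,j} = δ_{i,j}^T M^{-1} δ_{i,j}, where δ_{i,j} on the left is embedded into ℝ^{n+1}. -/

import Mathlib

open Matrix

/-- `P` is the Moore–Penrose pseudoinverse of the square matrix `M`. -/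
def IsMoorePenrose {α : Type*} [Fintype α] [DecidableEq α]
    (M P : Matrix α α ℝ) : Prop :=
  M * P * M = M ∧ P * M * P = P ∧ (M * P)ᵀ = M * P ∧ (P * M)ᵀ = P * M

/-- The vector `e i - e j`. -/
def delta {α : Type*} [DecidableEq α] (i j : α) : α → ℝ :=
  fun k => (if k = i then 1 else 0) - (if k = j then 1 else 0)

private lemma mulVec_dot {m : Type*} [Fintype m] (A : Matrix m m ℝ) (x y : m → ℝ) :
    (A.mulVec x) ⬝ᵥ y = x ⬝ᵥ (Aᵀ.mulVec y) := by
  rw [dotProduct_mulVec, vecMul_transpose, dotProduct_comm]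

theorem stmt13 {n : ℕ} (Q : Matrix (Fin n) (Fin n) ℝ)
    (hQsymm : Qᵀ = Q) (hQnn : ∀ i j, 0 ≤ Q i j) (hQdiag : ∀ i, Q i i = 0)
    (hρ : ∀ μ ∈ spectrum ℝ Q, |μ| ≤ 1 / 3)
    (hrow : ∀ i, ∑ j, Q i j < 1)
    (v : Fin n → ℝ) (hv : v = (1 - Q).mulVec (fun _ => 1))
    (L : Matrix (Fin n ⊕ Unit) (Fin n ⊕ Unit) ℝ)
    (hL : L = Matrix.fromBlocks (1 - Q) (Matrix.of fun i _ => -(v i))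
      (Matrix.of fun _ j => -(v j)) (Matrix.of fun _ _ => ∑ i, |v i|))
    (Ldag : Matrix (Fin n ⊕ Unit) (Fin n ⊕ Unit) ℝ)
    (hLdag : IsMoorePenrose L Ldag) :
    (Lᵀ = L) ∧ (∀ a, ∑ b, L a b = 0) ∧ (∀ a b, a ≠ b → L a b ≤ 0) ∧
    ∀ i j : Fin n,
      delta (Sum.inl i) (Sum.inl j) ⬝ᵥ Ldag.mulVec (delta (Sum.inl i) (Sum.inl j)) =
        delta i j ⬝ᵥ (1 - Q)⁻¹.mulVec (delta i j) := by
  set M : Matrix (Fin n) (Fin n) ℝ := 1 - Q with hM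
  have hMsymm : Mᵀ = M := by rw [hM, transpose_sub, transpose_one, hQsymm]
  -- v entrywise formula
  have hvval : ∀ i, v i = 1 - ∑ j, Q i j := by
    intro i
    simp [hv, hM, mulVec, dotProduct, Matrix.sub_apply, one_apply, Finset.sum_sub_distrib]
  have hvnn : ∀ i, 0 ≤ v i := fun i => by
    rw [hvval i]; linarith [hrow i]
  have habs : ∀ i, |v i| = v i := fun i => abs_of_nonneg (hvnn i)
  -- M is invertible
  have hMunit : IsUnit M.det := by
    by_contra h
    have h1 : (1 : ℝ) ∈ spectrum ℝ Q := by
      rw [spectrum.mem_iff]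
      intro hu
      exact h ((Matrix.isUnit_iff_isUnit_det _).mp (by simpa [hM] using hu))
    have := hρ 1 h1
    norm_num at this
  have hMM : M * M⁻¹ = 1 := Matrix.mul_nonsing_inv M hMunit
  -- symmetry of L
  have hLsymm : Lᵀ = L := by
    rw [hL, fromBlocks_transpose, hMsymm]
    congr 1
  refine ⟨hLsymm, ?_, ?_, ?_⟩
  · -- zero row sums
    intro a
    rw [hL]
    cases a with
    | inl i =>
      rw [Fintype.sum_sum_type]
      simp only [fromBlocks_apply₁₁, fromBlocks_apply₁₂, of_apply]
      have : ∑ j, M i j = v i := by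
        rw [hvval i]
        simp [hM, Matrix.sub_apply, one_apply, Finset.sum_sub_distrib]
      simp [this]
    | inr u =>
      rw [Fintype.sum_sum_type]
      simp only [fromBlocks_apply₂₁, fromBlocks_apply₂₂, of_apply]
      simp [habs, Finset.sum_neg_distrib]
  · -- off-diagonal nonpositive
    intro a b hab
    rw [hL]
    cases a with
    | inl i =>
      cases b with
      | inl j =>
        have hij : i ≠ j := fun h => hab (by rw [h])
        simp only [fromBlocks_apply₁₁]
        have : M i j = -Q i j := by simp [hM, Matrix.sub_apply, one_apply, hij]
        rw [this]
        simpa using hQnn i j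
      | inr u => simpa using hvnn i
    | inr u =>
      cases b with
      | inl j => simpa using hvnn j
      | inr u' => exact absurd (congrArg Sum.inr (Subsingleton.elim u u')) hab
  · -- main identity
    intro i j
    set δ : Fin n → ℝ := delta i j with hδ
    set x : Fin n → ℝ := M⁻¹.mulVec δ with hx
    set w : (Fin n ⊕ Unit) → ℝ := Sum.elim x 0 with hw
    have hMx : M.mulVec x = δ := by
      rw [hx, mulVec_mulVec, hMM, one_mulVec]
    have hvx : v ⬝ᵥ x = 0 := by
      rw [hv, mulVec_dot, hMsymm, hMx]
      simp [hδ, delta, dotProduct, Finset.sum_sub_distrib]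
    have hδhat : (delta (Sum.inl i) (Sum.inl j) : (Fin n ⊕ Unit) → ℝ) = Sum.elim δ 0 := by
      funext k
      cases k with
      | inl k => simp [delta, hδ, Sum.inl.injEq]
      | inr u => simp [delta]
    have hLw : L.mulVec w = delta (Sum.inl i) (Sum.inl j) := by
      rw [hL, hw, hδhat]
      rw [fromBlocks_mulVec]
      have hcl : (Sum.elim x (0 : Unit → ℝ)) ∘ Sum.inl = x := rfl
      have hcr : (Sum.elim x (0 : Unit → ℝ)) ∘ Sum.inr = 0 := rfl
      have hCx : (of fun (_ : Unit) j => -(v j)) *ᵥ x = 0 := by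
        funext u
        have h0 : ∑ k, v k * x k = 0 := hvx
        simp [mulVec, dotProduct, neg_mul, Finset.sum_neg_distrib, h0]
      rw [hcl, hcr, mulVec_zero, mulVec_zero, add_zero, add_zero, hMx, hCx]
    calc delta (Sum.inl i) (Sum.inl j) ⬝ᵥ Ldag.mulVec (delta (Sum.inl i) (Sum.inl j))
        = (L.mulVec w) ⬝ᵥ Ldag.mulVec (L.mulVec w) := by rw [hLw]
      _ = w ⬝ᵥ (Lᵀ.mulVec (Ldag.mulVec (L.mulVec w))) := mulVec_dot _ _ _
      _ = w ⬝ᵥ ((L * Ldag * L).mulVec w) := by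
          rw [hLsymm, mulVec_mulVec, mulVec_mulVec, Matrix.mul_assoc]
      _ = w ⬝ᵥ L.mulVec w := by rw [hLdag.1]
      _ = w ⬝ᵥ delta (Sum.inl i) (Sum.inl j) := by rw [hLw]
      _ = x ⬝ᵥ δ := by
          rw [hδhat, hw]
          simp [dotProduct, Fintype.sum_sum_type]
      _ = δ ⬝ᵥ (1 - Q)⁻¹.mulVec δ := by
          rw [hx, dotProduct_comm, hM]
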